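/- (Test-score moment under AR(1) skills.) Suppose skills follow an AR(1) process: θ_t = ρ·θ_{t−1} + ν_t for every integer t, with cov(θ_{t'}, ν_t) = 0 whenever t > t'. Suppose the measurement errors satisfy cov(η_t, θ_s) = 0 and cov(η_t, ν_s) = 0 for all integers t, s, and cov(η_t, η_s) = 0 for all t ≠ s. Then for every integer t and every integer ℓ ≥ 1, cov( T̃_{t+2} − ρ²·T̃_t , T̃_{t−ℓ} ) = 0; equivalently, cov( T̃_{t+2} − T̃_t − ϱ·T̃_t , T̃_{t−ℓ} ) = 0 with ϱ := ρ² − 1. -/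

import Mathlib

open MeasureTheory ProbabilityTheory

/-- Covariance of two real-valued random variables under measure `P`. -/
noncomputable def cov {Ω : Type*} [MeasurableSpace Ω] (P : Measure Ω) (X Y : Ω → ℝ) : ℝ :=
  ∫ ω, (X ω - ∫ a, X a ∂P) * (Y ω - ∫ a, Y a ∂P) ∂P

/-- Variance of a real-valued random variable under measure `P`. -/
noncomputable def Var {Ω : Type*} [MeasurableSpace Ω] (P : Measure Ω) (X : Ω → ℝ) : ℝ :=
  cov P X X

lemma cov_comm {Ω : Type*} [MeasurableSpace Ω] (P : Measure Ω) (X Y : Ω → ℝ) :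
    cov P X Y = cov P Y X := by
  unfold cov; congr 1; funext ω; ring

lemma cov_smul_left {Ω : Type*} [MeasurableSpace Ω] (P : Measure Ω) (c : ℝ) (X Y : Ω → ℝ) :
    cov P (fun ω => c * X ω) Y = c * cov P X Y := by
  unfold cov
  have h : ∀ ω, (c * X ω - ∫ a, c * X a ∂P) * (Y ω - ∫ a, Y a ∂P)
      = c * ((X ω - ∫ a, X a ∂P) * (Y ω - ∫ a, Y a ∂P)) := by
    intro ω; rw [integral_const_mul]; ring
  simp only [h]
  exact integral_const_mul c _

lemma integrable_mul_of_memL2 {Ω : Type*} [MeasurableSpace Ω] {P : Measure Ω} [IsFiniteMeasure P]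
    {f g : Ω → ℝ} (hf : MemLp f 2 P) (hg : MemLp g 2 P) :
    Integrable (fun ω => f ω * g ω) P := by
  have h : MemLp (f • g) 1 P := hg.smul hf (hpqr := ⟨by rw [inv_one]; exact ENNReal.inv_two_add_inv_two⟩)
  exact h.integrable le_rfl

lemma cov_add_left {Ω : Type*} [MeasurableSpace Ω] (P : Measure Ω) [IsProbabilityMeasure P]
    {X X' Y : Ω → ℝ} (hX : MemLp X 2 P) (hX' : MemLp X' 2 P) (hY : MemLp Y 2 P) :
    cov P (fun ω => X ω + X' ω) Y = cov P X Y + cov P X' Y := by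
  have hIX : Integrable X P := hX.integrable (by norm_num)
  have hIX' : Integrable X' P := hX'.integrable (by norm_num)
  have h1 : Integrable (fun ω => (X ω - ∫ a, X a ∂P) * (Y ω - ∫ a, Y a ∂P)) P :=
    integrable_mul_of_memL2 (hX.sub (memLp_const _)) (hY.sub (memLp_const _))
  have h2 : Integrable (fun ω => (X' ω - ∫ a, X' a ∂P) * (Y ω - ∫ a, Y a ∂P)) P :=
    integrable_mul_of_memL2 (hX'.sub (memLp_const _)) (hY.sub (memLp_const _))
  unfold cov
  rw [integral_add hIX hIX', ← integral_add h1 h2]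
  congr 1; funext ω; ring

lemma cov_add_right {Ω : Type*} [MeasurableSpace Ω] (P : Measure Ω) [IsProbabilityMeasure P]
    {X Y Y' : Ω → ℝ} (hX : MemLp X 2 P) (hY : MemLp Y 2 P) (hY' : MemLp Y' 2 P) :
    cov P X (fun ω => Y ω + Y' ω) = cov P X Y + cov P X Y' := by
  rw [cov_comm, cov_add_left P hY hY' hX, cov_comm P Y X, cov_comm P Y' X]

lemma cov_smul_right {Ω : Type*} [MeasurableSpace Ω] (P : Measure Ω) (c : ℝ) (X Y : Ω → ℝ) :
    cov P X (fun ω => c * Y ω) = c * cov P X Y := by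
  rw [cov_comm, cov_smul_left, cov_comm]

/-- Test-score moment under AR(1) skills: if `θ t = ρ * θ (t−1) + ν t` with the stated
orthogonality conditions, then `cov (T̃ (t+2) − ρ² T̃ t) (T̃ (t−ℓ)) = 0` for `ℓ ≥ 1`;
equivalently, `cov (T̃ (t+2) − T̃ t − ϱ T̃ t) (T̃ (t−ℓ)) = 0` with `ϱ = ρ² − 1`. -/
theorem AR1_test_score_moment
    {Ω : Type*} [MeasurableSpace Ω] (P : Measure Ω) [IsProbabilityMeasure P]
    (θ ν : ℤ → Ω → ℝ) (ρ : ℝ)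
    (hθ : ∀ t, MemLp (θ t) 2 P) (hν : ∀ t, MemLp (ν t) 2 P)
    (hAR : ∀ (t : ℤ) (ω : Ω), θ t ω = ρ * θ (t - 1) ω + ν t ω)
    (hθν : ∀ t t' : ℤ, t' < t → cov P (θ t') (ν t) = 0)
    (τ : ℝ) (η : ℤ → Ω → ℝ) (hη : ∀ t, MemLp (η t) 2 P)
    (T : ℤ → Ω → ℝ) (hT : ∀ t ω, T t ω = τ * θ t ω + η t ω)
    (hηθ : ∀ t s : ℤ, cov P (η t) (θ s) = 0)
    (hην : ∀ t s : ℤ, cov P (η t) (ν s) = 0)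
    (hηη : ∀ t s : ℤ, t ≠ s → cov P (η t) (η s) = 0) :
    ∀ t : ℤ, ∀ ℓ : ℤ, 1 ≤ ℓ →
      cov P (fun ω => T (t + 2) ω - ρ ^ 2 * T t ω) (T (t - ℓ)) = 0 ∧
        cov P (fun ω => T (t + 2) ω - T t ω - (ρ ^ 2 - 1) * T t ω) (T (t - ℓ)) = 0 := by
  intro t ℓ hℓ
  have key : cov P (fun ω => T (t + 2) ω - ρ ^ 2 * T t ω) (T (t - ℓ)) = 0 := by
    have hfun : (fun ω => T (t + 2) ω - ρ ^ 2 * T t ω)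
        = fun ω => τ * ν (t+2) ω + ((ρ*τ) * ν (t+1) ω
            + (1 * η (t+2) ω + (-(ρ^2)) * η t ω)) := by
      funext ω
      have h1 := hAR (t+2) ω
      have h2 := hAR (t+1) ω
      have e1 : t+2-1 = t+1 := by ring
      have e2 : t+1-1 = t := by ring
      rw [e1] at h1; rw [e2] at h2
      rw [hT, hT, h1, h2]; ring
    have hgfun : T (t - ℓ) = fun ω => τ * θ (t-ℓ) ω + 1 * η (t-ℓ) ω := by
      funext ω; rw [hT]; ring
    have mY : MemLp (fun ω => τ * θ (t-ℓ) ω + 1 * η (t-ℓ) ω) 2 P :=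
      ((hθ _).const_mul τ).add ((hη _).const_mul 1)
    have hz : ∀ (Z : Ω → ℝ), MemLp Z 2 P → cov P Z (θ (t-ℓ)) = 0 → cov P Z (η (t-ℓ)) = 0 →
        cov P Z (fun ω => τ * θ (t-ℓ) ω + 1 * η (t-ℓ) ω) = 0 := by
      intro Z hZ h1 h2
      rw [cov_add_right P hZ ((hθ _).const_mul τ) ((hη _).const_mul 1),
        cov_smul_right, cov_smul_right, h1, h2]
      ring
    have m34 : MemLp (fun ω => 1 * η (t+2) ω + (-(ρ^2)) * η t ω) 2 P :=
      ((hη _).const_mul 1).add ((hη _).const_mul (-(ρ^2)))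
    have m234 : MemLp (fun ω => (ρ*τ) * ν (t+1) ω
        + (1 * η (t+2) ω + (-(ρ^2)) * η t ω)) 2 P :=
      ((hν _).const_mul (ρ*τ)).add m34
    rw [hfun, hgfun,
      cov_add_left P ((hν _).const_mul τ) m234 mY,
      cov_add_left P ((hν _).const_mul (ρ*τ)) m34 mY,
      cov_add_left P ((hη _).const_mul 1) ((hη _).const_mul (-(ρ^2))) mY]
    simp only [cov_smul_left]
    rw [hz (ν (t+2)) (hν _) (by rw [cov_comm]; exact hθν _ _ (by omega))
        (by rw [cov_comm]; exact hην _ _),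
      hz (ν (t+1)) (hν _) (by rw [cov_comm]; exact hθν _ _ (by omega))
        (by rw [cov_comm]; exact hην _ _),
      hz (η (t+2)) (hη _) (hηθ _ _) (hηη _ _ (by omega)),
      hz (η t) (hη _) (hηθ _ _) (hηη _ _ (by omega))]
    ring
  refine ⟨key, ?_⟩
  have : (fun ω => T (t + 2) ω - T t ω - (ρ ^ 2 - 1) * T t ω)
      = fun ω => T (t + 2) ω - ρ ^ 2 * T t ω := by
    funext ω; ring
  rw [this]; exact key
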